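/- For every integer n ≥ 1, there exists a universal cycle for the set of walks of length n on the honeycomb lattice, encoded as words w : Fin n → (Fin 3 × Bool) over the six-letter alphabet {x⁺, x⁻, y⁺, y⁻, z⁺, z⁻} (first coordinate the axis, second coordinate the sign) such that consecutive letters have opposite signs: (w(i+1)).2 = ¬(w(i)).2 for all i with i + 1 < n. -/

import Mathlib

open List Finset

section Euler
variable {V E : Type} [Fintype E] [DecidableEq E] [DecidableEq V] (s t : E → V)

private lemma count_identity (v : V) :
    ∀ (l : List E) (hl : l ≠ []), l.Chain' (fun a b => t a = s b) →
      l.countP (fun e => decide (s e = v)) + (if t (l.getLast hl) = v then 1 else 0)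
      = l.countP (fun e => decide (t e = v)) + (if s (l.head hl) = v then 1 else 0)
  | [], hl, _ => absurd rfl hl
  | [e], _, _ => by
      simp only [List.countP_cons, List.countP_nil, List.getLast_singleton, List.head_cons]
      by_cases h1 : s e = v <;> by_cases h2 : t e = v <;> simp [h1, h2]
  | (x :: y :: r), _, hc => by
      have hR : t x = s y := (List.isChain_cons_cons.mp hc).1
      have ih := count_identity v (y :: r) (by simp) (List.isChain_cons_cons.mp hc).2
      have e1 : (x :: y :: r).countP (fun e => decide (s e = v))
          = (y :: r).countP (fun e => decide (s e = v)) + (if s x = v then 1 else 0) := by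
        rw [List.countP_cons]; by_cases h : s x = v <;> simp [h]
      have e2 : (x :: y :: r).countP (fun e => decide (t e = v))
          = (y :: r).countP (fun e => decide (t e = v)) + (if t x = v then 1 else 0) := by
        rw [List.countP_cons]; by_cases h : t x = v <;> simp [h]
      rw [e1, e2, List.getLast_cons (by simp : (y :: r) ≠ [])]
      simp only [List.head_cons] at ih ⊢
      rw [hR]
      by_cases h1 : s x = v <;> by_cases h2 : s y = v <;>
        by_cases h3 : t ((y :: r).getLast (by simp)) = v <;>
        simp only [h1, h2, h3, if_true, if_false] at ih ⊢ <;> omega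

private lemma countP_all_mem {p : E → Prop} [DecidablePred p] {l : List E}
    (hn : l.Nodup) (hall : ∀ e, p e → e ∈ l) :
    l.countP (fun e => decide (p e)) = (Finset.univ.filter p).card := by
  rw [List.countP_eq_length_filter, ← List.toFinset_card_of_nodup (hn.filter _)]
  congr 1
  ext e
  simp only [List.mem_toFinset, List.mem_filter, Finset.mem_filter, Finset.mem_univ,
    true_and, decide_eq_true_eq]
  exact ⟨fun h => h.2, fun h => ⟨hall e h, h⟩⟩

private lemma countP_le_card {p : E → Prop} [DecidablePred p] {l : List E}
    (hn : l.Nodup) :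
    l.countP (fun e => decide (p e)) ≤ (Finset.univ.filter p).card := by
  rw [List.countP_eq_length_filter, ← List.toFinset_card_of_nodup (hn.filter _)]
  apply Finset.card_le_card
  intro e he
  simp only [List.mem_toFinset, List.mem_filter, decide_eq_true_eq] at he
  simp [he.2]

private lemma trail_rotate {R : E → E → Prop} {a b : List E} (hn : (a ++ b).Nodup)
    (hc : (a ++ b).Chain' R) (hne : a ++ b ≠ [])
    (hclosed : R ((a ++ b).getLast hne) ((a ++ b).head hne)) :
    (b ++ a).Nodup ∧ (b ++ a).Chain' R ∧
      ∀ hne' : b ++ a ≠ [], R ((b ++ a).getLast hne') ((b ++ a).head hne') := by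
  rcases eq_or_ne a [] with rfl | ha
  · simp only [List.nil_append, List.append_nil] at *
    exact ⟨hn, hc, fun _ => hclosed⟩
  rcases eq_or_ne b [] with rfl | hb
  · simp only [List.nil_append, List.append_nil] at *
    exact ⟨hn, hc, fun _ => hclosed⟩
  have hn' : (b ++ a).Nodup := (List.perm_append_comm.nodup_iff).mpr hn
  obtain ⟨hca, hcb, hjunc⟩ := List.isChain_append.mp hc
  have hlast : (a ++ b).getLast hne = b.getLast hb := List.getLast_append_of_ne_nil hne hb
  have hhead : (a ++ b).head hne = a.head ha := List.head_append_of_ne_nil ha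
  refine ⟨hn', ?_, ?_⟩
  · simp only [List.Chain']
    rw [List.isChain_append]
    refine ⟨hcb, hca, ?_⟩
    intro x hx y hy
    rw [List.getLast?_eq_getLast hb] at hx
    rw [List.head?_eq_head ha] at hy
    obtain rfl := Option.mem_some_iff.mp hx
    obtain rfl := Option.mem_some_iff.mp hy
    rw [hlast, hhead] at hclosed
    exact hclosed
  · intro hne'
    have hlast' : (b ++ a).getLast hne' = a.getLast ha := List.getLast_append_of_ne_nil hne' ha
    have hhead' : (b ++ a).head hne' = b.head hb := List.head_append_of_ne_nil hb
    rw [hlast', hhead']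
    exact hjunc _ (List.getLast?_eq_getLast ha ▸ rfl) _ (List.head?_eq_head hb ▸ rfl)

end Euler

theorem euler_circuit {V E : Type} [Fintype E] [DecidableEq E] [DecidableEq V]
    [Nonempty E] (s t : E → V)
    (bal : ∀ v, (Finset.univ.filter (fun e => s e = v)).card
              = (Finset.univ.filter (fun e => t e = v)).card)
    (conn : ∀ a b : E, Relation.ReflTransGen (fun a b => t a = s b) a b) :
    ∃ f : ZMod (Fintype.card E) → E, Function.Bijective f ∧
      ∀ i, t (f i) = s (f (i + 1)) := by
  classical
  set R : E → E → Prop := fun a b => t a = s b with hRdef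
  set P : ℕ → Prop := fun m => ∃ l : List E, l.Nodup ∧ l.Chain' R ∧ l.length = m with hPdef
  have hP1 : P 1 := ⟨[Classical.arbitrary E], by simp, List.isChain_singleton _, rfl⟩
  have hbound : ∀ m, P m → m ≤ Fintype.card E := by
    rintro m ⟨l, hn, -, hl⟩; exact hl ▸ hn.length_le_card
  have hcard1 : 1 ≤ Fintype.card E := Fintype.card_pos
  set M := Nat.findGreatest P (Fintype.card E) with hM
  have hPM : P M := Nat.findGreatest_spec hcard1 hP1
  have hmax : ∀ l' : List E, l'.Nodup → l'.Chain' R → l'.length ≤ M := by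
    intro l' hn' hc'
    by_contra h
    push_neg at h
    exact Nat.findGreatest_is_greatest h (hbound _ ⟨l', hn', hc', rfl⟩) ⟨l', hn', hc', rfl⟩
  have hMpos : 1 ≤ M := Nat.le_findGreatest hcard1 hP1
  -- every maximal trail is closed
  have closed : ∀ (l : List E) (hne : l ≠ []), l.Nodup → l.Chain' R → l.length = M →
      s (l.head hne) = t (l.getLast hne) := by
    intro l hne hnd hch hlen
    set v := t (l.getLast hne) with hv
    have hext : ∀ e, s e = v → e ∈ l := by
      intro e hsev
      by_contra hel
      have hnd' : (l ++ [e]).Nodup := by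
        rw [List.nodup_append]
        exact ⟨hnd, List.nodup_singleton e, by simp only [List.mem_singleton]; rintro a ha b rfl rfl; exact hel ha⟩
      have hch' : (l ++ [e]).Chain' R := by
        simp only [List.Chain']
        rw [List.isChain_append]
        refine ⟨hch, List.isChain_singleton e, ?_⟩
        intro x hx y hy
        rw [List.getLast?_eq_getLast hne] at hx
        obtain rfl := Option.mem_some_iff.mp hx
        simp only [List.head?_cons, Option.mem_some_iff] at hy
        subst hy
        show t _ = s _
        rw [hsev, hv]
      have := hmax _ hnd' hch'
      simp only [List.length_append, List.length_singleton, hlen] at this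
      omega
    have hA : l.countP (fun e => decide (s e = v))
        = (Finset.univ.filter (fun e => s e = v)).card := countP_all_mem hnd hext
    have hB : l.countP (fun e => decide (t e = v))
        ≤ (Finset.univ.filter (fun e => t e = v)).card := countP_le_card hnd
    have hid := count_identity s t v l hne hch
    rw [if_pos hv.symm] at hid
    by_contra hsh
    rw [if_neg (fun h => hsh h)] at hid
    rw [hA] at hid
    rw [bal v] at hid
    omega
  -- a maximal trail visits every edge
  obtain ⟨l, hnd, hch, hlen⟩ := hPM
  have hne : l ≠ [] := by
    intro h; rw [h] at hlen; simp at hlen; omega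
  have hall : ∀ e : E, e ∈ l := by
    by_contra hcov
    push_neg at hcov
    obtain ⟨e, hel⟩ := hcov
    -- find a boundary pair
    have cross : ∀ {a b : E}, Relation.ReflTransGen R a b → a ∈ l → b ∉ l →
        ∃ x ∈ l, ∃ y, y ∉ l ∧ R x y := by
      intro a b hab
      induction hab with
      | refl => exact fun h1 h2 => absurd h1 h2
      | @tail c d hac hcd ih =>
        intro ha hb
        by_cases hc : c ∈ l
        · exact ⟨c, hc, d, hb, hcd⟩
        · exact ih ha hc
    obtain ⟨x, hx, y, hy, hxy⟩ := cross (conn (l.head hne) e) (List.head_mem hne) hel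
    obtain ⟨l₁, l₂, rfl⟩ := List.append_of_mem hx
    have hsplit : l₁ ++ x :: l₂ = (l₁ ++ [x]) ++ l₂ := by simp
    rw [hsplit] at hnd hch hne hlen hy
    have hclosed := closed ((l₁ ++ [x]) ++ l₂) hne hnd hch hlen
    obtain ⟨rnd, rch, rcl⟩ := trail_rotate hnd hch hne hclosed.symm
    set r := l₂ ++ (l₁ ++ [x]) with hr
    have hrlast : ∀ h : r ≠ [], r.getLast h = x := by
      intro h
      show (l₂ ++ (l₁ ++ [x])).getLast (by simp) = x
      rw [List.getLast_append_of_ne_nil _ (by simp), List.getLast_concat]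
    have hynr : y ∉ r := by
      intro hmem
      apply hy
      have : r ~ (l₁ ++ [x]) ++ l₂ := List.perm_append_comm
      exact this.mem_iff.mp hmem
    have hnd' : (r ++ [y]).Nodup := by
      rw [List.nodup_append]
      exact ⟨rnd, List.nodup_singleton y, by simp only [List.mem_singleton]; rintro a ha b rfl rfl; exact hynr ha⟩
    have hch' : (r ++ [y]).Chain' R := by
      simp only [List.Chain']
      rw [List.isChain_append]
      refine ⟨rch, List.isChain_singleton y, ?_⟩
      intro a ha b hb
      have hrne : r ≠ [] := by simp [hr]
      rw [List.getLast?_eq_getLast hrne] at ha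
      obtain rfl := Option.mem_some_iff.mp ha
      simp only [List.head?_cons, Option.mem_some_iff] at hb
      subst hb
      rw [hrlast hrne]
      exact hxy
    have := hmax _ hnd' hch'
    have hrlen : r.length = M := by
      rw [hr, List.length_append]
      rw [List.length_append] at hlen
      omega
    simp only [List.length_append, List.length_singleton, hrlen] at this
    omega
  -- l has full length
  have hlenE : l.length = Fintype.card E := by
    have h1 : l.toFinset = Finset.univ := Finset.eq_univ_iff_forall.mpr
      (fun e => List.mem_toFinset.mpr (hall e))
    rw [← List.toFinset_card_of_nodup hnd, h1, Finset.card_univ]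
  haveI : NeZero (Fintype.card E) := ⟨Fintype.card_pos.ne'⟩
  refine ⟨fun i => l.get ⟨i.val, by rw [hlenE]; exact i.val_lt⟩, ⟨?_, ?_⟩, ?_⟩
  · intro i j hij
    have := (hnd.get_inj_iff).mp hij
    have hv : i.val = j.val := by simpa using congrArg Fin.val this
    exact ZMod.val_injective _ hv
  · intro e
    obtain ⟨⟨k, hk⟩, hget⟩ := List.mem_iff_get.mp (hall e)
    refine ⟨(k : ZMod (Fintype.card E)), ?_⟩
    have hkv : ((k : ZMod (Fintype.card E))).val = k := by
      rw [ZMod.val_natCast, Nat.mod_eq_of_lt (by rw [← hlenE]; exact hk)]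
    simp only [hkv]
    exact hget
  · intro i
    have hiv : i.val < l.length := by rw [hlenE]; exact i.val_lt
    have hsucc : (i + 1).val = (i.val + 1) % Fintype.card E := by
      rw [ZMod.val_add]
      have h1 : (1 : ZMod (Fintype.card E)).val = 1 % Fintype.card E := by
        rw [← Nat.cast_one, ZMod.val_natCast]
      rw [h1]
      try exact Nat.ModEq.add_left i.val (Nat.mod_modEq 1 _)
    by_cases hcase : i.val + 1 < Fintype.card E
    · have h2 : (i + 1).val = i.val + 1 := by rw [hsucc, Nat.mod_eq_of_lt hcase]
      have := List.isChain_iff_getElem.mp hch i.val (by omega)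
      show R _ _
      simp only [List.get_eq_getElem]
      convert this using 3
      all_goals exact h2
    · have hieq : i.val + 1 = Fintype.card E := by have := i.val_lt; omega
      have h2 : (i + 1).val = 0 := by rw [hsucc, hieq, Nat.mod_self]
      have hclosed := closed l hne hnd hch hlen
      show R _ _
      have hL : l.getLast hne = l.get ⟨i.val, hiv⟩ := by
        rw [List.getLast_eq_getElem, List.get_eq_getElem]
        congr 1
        simp [hlenE]; omega
      have hH : l.head hne = l.get ⟨(i+1).val, by rw [hlenE]; exact (i+1).val_lt⟩ := by
        rw [← List.get_mk_zero (by rw [hlenE]; exact Fintype.card_pos)]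
        congr 1
        apply Fin.ext
        simp [h2]
      show R (l.get ⟨i.val, hiv⟩) (l.get ⟨(i+1).val, by rw [hlenE]; exact (i+1).val_lt⟩)
      rw [← hL, ← hH]
      exact hclosed.symm

section DeBruijn

private def snocEquiv (k : ℕ) (v : Fin k → Fin 3) :
    {w : Fin (k+1) → Fin 3 // (fun j : Fin k => w j.castSucc) = v} ≃ Fin 3 where
  toFun w := w.1 (Fin.last k)
  invFun a := ⟨Fin.snoc v a, by funext j; simp⟩
  left_inv w := by
    apply Subtype.ext
    funext j
    induction j using Fin.lastCases with
    | last => simp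
    | cast i => simp [← congrFun w.2 i]
  right_inv a := by simp

private def consEquiv (k : ℕ) (v : Fin k → Fin 3) :
    {w : Fin (k+1) → Fin 3 // (fun j : Fin k => w j.succ) = v} ≃ Fin 3 where
  toFun w := w.1 0
  invFun a := ⟨Fin.cons a v, by funext j; simp⟩
  left_inv w := by
    apply Subtype.ext
    funext j
    induction j using Fin.cases with
    | zero => simp
    | succ i => simp [← congrFun w.2 i]
  right_inv a := by simp

private lemma debruijn_conn (k : ℕ) : ∀ (m : ℕ) (a b : Fin (k+1) → Fin 3),
    (∀ i : ℕ, (h : i + m < k + 1) → a ⟨i + m, h⟩ = b ⟨i, by omega⟩) →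
    Relation.ReflTransGen (fun w w' : Fin (k+1) → Fin 3 =>
      (fun j : Fin k => w j.succ) = fun j : Fin k => w' j.castSucc) a b
  | 0, a, b, hab => by
      have : a = b := by
        funext j
        have := hab j.val (by omega)
        convert this using 2 <;> simp
      exact this ▸ Relation.ReflTransGen.refl
  | (m+1), a, b, hab => by
      set x : Fin (k+1) → Fin 3 :=
        Fin.snoc (fun j : Fin k => a j.succ) (b ⟨k - m, by omega⟩) with hx
      have step : (fun j : Fin k => a j.succ) = fun j : Fin k => x j.castSucc := by
        funext j; simp [hx]
      refine Relation.ReflTransGen.head step ?_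
      apply debruijn_conn k m x b
      intro i h
      by_cases hik : i + m < k
      · have e1 : (⟨i + m, by omega⟩ : Fin (k+1)) = Fin.castSucc ⟨i + m, hik⟩ :=
          Fin.ext rfl
        rw [e1, hx, Fin.snoc_castSucc]
        have := hab i (by omega)
        convert this using 2 <;> simp <;> omega
      · have him : i + m = k := by omega
        have e1 : (⟨i + m, by omega⟩ : Fin (k+1)) = Fin.last k := Fin.ext (by simpa)
        rw [e1, hx, Fin.snoc_last]
        congr 1
        apply Fin.ext
        show k - m = i
        omega

private lemma deBruijn_exists (n : ℕ) (hn : 1 ≤ n) :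
    ∃ d : ZMod (3 ^ n) → Fin 3,
      Function.Bijective (fun (i : ZMod (3 ^ n)) =>
        fun (j : Fin n) => d (i + (j.val : ZMod (3 ^ n)))) := by
  obtain ⟨k, rfl⟩ : ∃ k, n = k + 1 := ⟨n - 1, by omega⟩
  have hcEq : Fintype.card (Fin (k+1) → Fin 3) = 3 ^ (k+1) := by simp
  rw [← hcEq]
  obtain ⟨f, hbij, hcompat⟩ := euler_circuit
    (fun w : Fin (k+1) → Fin 3 => fun j : Fin k => w j.castSucc)
    (fun w : Fin (k+1) → Fin 3 => fun j : Fin k => w j.succ)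
    (fun v => by
      rw [← Fintype.card_subtype, ← Fintype.card_subtype]
      exact Fintype.card_congr ((snocEquiv k v).trans (consEquiv k v).symm))
    (fun a b => debruijn_conn k (k+1) a b (fun i h => by omega))
  haveI : NeZero (Fintype.card (Fin (k+1) → Fin 3)) := ⟨Fintype.card_pos.ne'⟩
  refine ⟨fun i => f i ⟨0, by omega⟩, ?_⟩
  have hwin : ∀ (v : ℕ) (hv : v < k + 1) (i : ZMod (Fintype.card (Fin (k+1) → Fin 3))),
      f i ⟨v, hv⟩ = f (i + (v : ZMod _)) ⟨0, by omega⟩ := by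
    intro v
    induction v with
    | zero => intro hv i; simp
    | succ v ih =>
      intro hv i
      have hvk : v < k := by omega
      have h1 : f i ⟨v + 1, hv⟩ = f (i + 1) ⟨v, by omega⟩ := by
        have := congrFun (hcompat i) ⟨v, hvk⟩
        simpa [Fin.succ, Fin.castSucc, Fin.castAdd, Fin.castLE] using this
      rw [h1, ih (by omega) (i + 1)]
      congr 1
      push_cast
      ring
  have : (fun (i : ZMod (Fintype.card (Fin (k+1) → Fin 3))) =>
      fun (j : Fin (k+1)) => f (i + (j.val : ZMod _)) ⟨0, by omega⟩) = f := by
    funext i j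
    rw [← hwin j.val j.isLt i]
  rw [this]
  exact hbij

end DeBruijn

section Assembly

private lemma val_add_natCast_modEq {m q : ℕ} [NeZero m] (hq : q ∣ m) (i : ZMod m) (j : ℕ) :
    (i + (j : ZMod m)).val ≡ i.val + j [MOD q] := by
  rw [ZMod.val_add, ZMod.val_natCast]
  exact ((Nat.mod_modEq _ m).of_dvd hq).trans
    (Nat.ModEq.add_left _ ((Nat.mod_modEq j m).of_dvd hq))

private lemma alt_char {n : ℕ} (hn : 1 ≤ n) (w : Fin n → Fin 3 × Bool)
    (hw : ∀ i : ℕ, ∀ h : i + 1 < n, (w ⟨i + 1, h⟩).2 = !(w ⟨i, Nat.lt_of_succ_lt h⟩).2) :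
    ∀ (j : ℕ) (hj : j < n), (w ⟨j, hj⟩).2
      = if j % 2 = 0 then (w ⟨0, hn⟩).2 else !(w ⟨0, hn⟩).2 := by
  intro j
  induction j with
  | zero => intro hj; simp
  | succ j ih =>
    intro hj
    rw [hw j hj, ih (by omega)]
    by_cases hp : j % 2 = 0
    · have h2 : (j + 1) % 2 = 1 := by omega
      simp [hp, h2]
    · have h2 : (j + 1) % 2 = 0 := by omega
      simp [hp, h2]

private def honeyEquiv (n : ℕ) (hn : 1 ≤ n) :
    {w : Fin n → Fin 3 × Bool //
      ∀ i : ℕ, ∀ h : i + 1 < n, (w ⟨i + 1, h⟩).2 = !(w ⟨i, Nat.lt_of_succ_lt h⟩).2}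
      ≃ (Fin n → Fin 3) × Bool where
  toFun w := (fun j => (w.1 j).1, (w.1 ⟨0, hn⟩).2)
  invFun p := ⟨fun j => (p.1 j, if j.val % 2 = 0 then p.2 else !p.2), by
    intro i h
    simp only
    by_cases hp : i % 2 = 0
    · have h2 : (i + 1) % 2 = 1 := by omega
      simp [hp, h2]
    · have h2 : (i + 1) % 2 = 0 := by omega
      simp [hp, h2]⟩
  left_inv w := by
    apply Subtype.ext
    funext j
    apply Prod.ext
    · rfl
    · exact (alt_char hn w.1 w.2 j.val j.isLt).symm
  right_inv p := by
    apply Prod.ext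
    · rfl
    · simp

end Assembly



/- The finite set of words of length `k` over a finite alphabet `A`
satisfying a predicate `P`. -/
open Classical in
noncomputable def wordsOf {A : Type*} [Fintype A] {k : ℕ} (P : (Fin k → A) → Prop) :
    Finset (Fin k → A) :=
  Finset.univ.filter P

/-- A nonempty finite set `S` of words of length `k` over `A` admits a universal cycle:
a function `c : ZMod S.card → A` such that `i ↦ (fun j => c (i + j))` is a bijection
from `ZMod S.card` onto `S`. -/
def HasUCycle {A : Type*} {k : ℕ} (S : Finset (Fin k → A)) : Prop :=
  ∃ c : ZMod S.card → A,
    Set.BijOn (fun i : ZMod S.card => fun j : Fin k => c (i + (j.val : ZMod S.card)))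
      Set.univ ↑S

/-- U-cycles of walks of length `n` on the honeycomb lattice exist for all `n ≥ 1`.
Walks are encoded as words over `Fin 3 × Bool` (axis and sign) in which consecutive
letters have opposite signs. -/
theorem ucycle_honeycomb_walks (n : ℕ) (hn : 1 ≤ n) :
    HasUCycle (wordsOf (fun w : Fin n → Fin 3 × Bool =>
      ∀ i : ℕ, ∀ h : i + 1 < n, (w ⟨i + 1, h⟩).2 = !(w ⟨i, by omega⟩).2)) := by
  classical
  set Pr : (Fin n → Fin 3 × Bool) → Prop := fun w =>
    ∀ i : ℕ, ∀ h : i + 1 < n, (w ⟨i + 1, h⟩).2 = !(w ⟨i, by omega⟩).2 with hPr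
  have hmem : ∀ w, w ∈ wordsOf Pr ↔ Pr w := by
    intro w; simp [wordsOf]
  have hcard : (wordsOf Pr).card = 3 ^ n * 2 := by
    rw [wordsOf, ← Fintype.card_subtype, Fintype.card_congr (honeyEquiv n hn)]
    simp
  unfold HasUCycle
  rw [hcard]
  set m : ℕ := 3 ^ n * 2 with hm
  haveI : NeZero m := ⟨by positivity⟩
  haveI : NeZero (3 ^ n) := ⟨by positivity⟩
  have h2m : 2 ∣ m := dvd_mul_left 2 (3 ^ n)
  have h3m : 3 ^ n ∣ m := dvd_mul_right (3 ^ n) 2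
  obtain ⟨d, hd⟩ := deBruijn_exists n hn
  set π : ZMod m → ZMod (3 ^ n) := fun i => ((i.val : ℕ) : ZMod (3 ^ n)) with hπ
  have hπadd : ∀ (i : ZMod m) (j : ℕ), π (i + (j : ZMod m)) = π i + (j : ZMod (3 ^ n)) := by
    intro i j
    rw [hπ]
    simp only
    rw [(ZMod.natCast_eq_natCast_iff _ _ _).mpr (val_add_natCast_modEq h3m i j)]
    push_cast
    ring
  have hsgn : ∀ (i : ZMod m) (j : ℕ), (i + (j : ZMod m)).val % 2 = (i.val + j) % 2 :=
    fun i j => (val_add_natCast_modEq h2m i j)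
  set c : ZMod m → Fin 3 × Bool :=
    fun i => (d (π i), decide (i.val % 2 = 1)) with hc
  refine ⟨c, ?_, ?_, ?_⟩
  · -- MapsTo
    intro i _
    refine Finset.mem_coe.mpr ((hmem _).mpr ?_)
    intro i' h
    simp only [hc]
    show decide ((i + ((i' + 1 : ℕ) : ZMod m)).val % 2 = 1)
        = !decide ((i + ((i' : ℕ) : ZMod m)).val % 2 = 1)
    rw [hsgn, hsgn]
    by_cases hp : (i.val + i') % 2 = 1
    · have h2 : (i.val + (i' + 1)) % 2 = 0 := by omega
      simp [hp, h2]
    · have h2 : (i.val + (i' + 1)) % 2 = 1 := by omega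
      simp [hp, h2]
  · -- InjOn
    intro i₁ _ i₂ _ heq
    simp only at heq
    have hfst : ∀ j : Fin n, d (π i₁ + (j.val : ZMod (3 ^ n)))
        = d (π i₂ + (j.val : ZMod (3 ^ n))) := by
      intro j
      have := congrArg Prod.fst (congrFun heq j)
      simpa [hc, hπadd] using this
    have hx : π i₁ = π i₂ := hd.injective (funext fun j => hfst j)
    have hsnd : i₁.val % 2 = i₂.val % 2 := by
      have := congrArg Prod.snd (congrFun heq ⟨0, hn⟩)
      simp only [hc] at this
      rw [show ((⟨0, hn⟩ : Fin n).val : ZMod m) = 0 by norm_num] at this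
      simp only [add_zero] at this
      rw [decide_eq_decide] at this
      omega
    have hmod3 : i₁.val ≡ i₂.val [MOD 3 ^ n] := by
      rw [hπ] at hx
      exact (ZMod.natCast_eq_natCast_iff _ _ _).mp hx
    have hmod2 : i₁.val ≡ i₂.val [MOD 2] := hsnd
    have hmodm : i₁.val ≡ i₂.val [MOD m] :=
      (Nat.modEq_and_modEq_iff_modEq_mul
        (Nat.Coprime.pow_left n (by decide))).mp ⟨hmod3, hmod2⟩
    apply ZMod.val_injective
    have l1 := ZMod.val_lt i₁
    have l2 := ZMod.val_lt i₂
    rwa [Nat.ModEq, Nat.mod_eq_of_lt l1, Nat.mod_eq_of_lt l2] at hmodm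
  · -- SurjOn
    intro w hw
    rw [Finset.mem_coe, hmem] at hw
    obtain ⟨x, hx⟩ := hd.surjective (fun j => (w j).1)
    set N := x.val with hN
    have hNlt : N < 3 ^ n := ZMod.val_lt x
    have hodd : 3 ^ n % 2 = 1 := Nat.odd_iff.mp (Odd.pow (by decide))
    set b₀ := (w ⟨0, hn⟩).2 with hb₀
    set N' : ℕ := if decide (N % 2 = 1) = b₀ then N else N + 3 ^ n with hN'
    have hN'lt : N' < m := by
      rw [hN', hm]; split <;> omega
    have hN'par : decide (N' % 2 = 1) = b₀ := by
      rw [hN']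
      split
      · assumption
      · rename_i hne
        have : (N + 3 ^ n) % 2 = (N + 1) % 2 := by omega
        rw [this]
        rcases Bool.eq_false_or_eq_true b₀ with hb | hb <;>
          rw [hb] at hne ⊢ <;> simp at hne ⊢ <;> omega
    have hN'mod3 : N' % 3 ^ n = N := by
      rw [hN']; split
      · exact Nat.mod_eq_of_lt hNlt
      · rw [Nat.add_mod_right]; exact Nat.mod_eq_of_lt hNlt
    set i : ZMod m := (N' : ZMod m) with hi
    have hival : i.val = N' := by
      rw [hi, ZMod.val_natCast, Nat.mod_eq_of_lt hN'lt]
    have hπi : π i = x := by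
      rw [hπ]
      simp only
      rw [hival]
      have hcast : ((N' : ℕ) : ZMod (3 ^ n)) = ((N' % 3 ^ n : ℕ) : ZMod (3 ^ n)) := by
        rw [ZMod.natCast_eq_natCast_iff]
        exact (Nat.mod_modEq N' _).symm
      rw [hcast, hN'mod3, hN, ZMod.natCast_val, ZMod.cast_id]
    refine ⟨i, Set.mem_univ i, ?_⟩
    funext j
    apply Prod.ext
    · show (d (π (i + (j.val : ZMod m))), _).1 = (w j).1
      simp only [hπadd, hπi]
      exact congrFun hx j
    · show decide ((i + (j.val : ZMod m)).val % 2 = 1) = (w j).2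
      rw [hsgn, hival]
      rw [alt_char hn w hw j.val j.isLt, ← hb₀]
      have hp := hN'par
      by_cases hj : j.val % 2 = 0
      · have : (N' + j.val) % 2 = N' % 2 := by omega
        rw [this, hj]
        simpa using hp
      · have : (N' + j.val) % 2 = (N' + 1) % 2 := by omega
        rw [this]
        simp only [hj, if_false]
        rw [← hp]
        rcases Nat.even_or_odd N' with he | ho
        · have e1 : N' % 2 = 0 := Nat.even_iff.mp he
          have e2 : (N' + 1) % 2 = 1 := by omega
          simp [e1, e2]
        · have e1 : N' % 2 = 1 := Nat.odd_iff.mp ho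
          have e2 : (N' + 1) % 2 = 0 := by omega
          simp [e1, e2]
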